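/- arXiv:1207.3909 — 2 statements merged into one kernel-verified Lean document; each statement's English description precedes it below -/
import Mathlib

section
/- For integers s ≥ 2 and 1 ≤ j ≤ ⌊s/2⌋, the sum Q(s,j) = Σ_{1 ≤ i_1 < i_2 < ⋯ < i_j ≤ s, with 2 ≤ i_1, 4 ≤ i_2, …, 2j ≤ i_j} (i_1−1)(i_2−3)⋯(i_j−2j+1) equals s!/(2^j · (s−2j)! · j!). -/
open Finset Nat

private def S (s j : ℕ) : ℚ :=
  ∑ i ∈ Finset.univ.filter
      (fun i : Fin j → Fin (s + 1) =>
        StrictMono i ∧ ∀ m : Fin j, 2 * ((m : ℕ) + 1) ≤ (i m : ℕ)),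
    ∏ m : Fin j, ((i m : ℚ) - (2 * (m : ℕ) + 1))

private lemma S_base (s : ℕ) : S s 0 = 1 := by
  rw [S, Finset.filter_true_of_mem (fun i _ => ⟨fun a => a.elim0, fun m => m.elim0⟩)]
  simp [Finset.sum_const, Finset.card_univ]

private lemma S_zero (s j : ℕ) (h : s < 2 * j) : S s j = 0 := by
  rw [S, Finset.sum_eq_zero]
  intro i hi
  simp only [mem_filter] at hi
  have hj : 0 < j := by omega
  have := hi.2.2 ⟨j - 1, by omega⟩
  have h2 := (i ⟨j-1, by omega⟩).isLt
  simp at this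
  omega

private lemma ne_last_aux {s j : ℕ} {i : Fin (j+1) → Fin (s+1+1)}
    (hmono : StrictMono i) (hne : i (Fin.last j) ≠ Fin.last (s+1)) (m : Fin (j+1)) :
    i m ≠ Fin.last (s+1) := by
  intro hEq
  have hm := Fin.le_def.mp (hmono.monotone (Fin.le_last m))
  have h1 : (i m : ℕ) = s + 1 := by rw [hEq]; simp
  have h2 : (i (Fin.last j) : ℕ) ≤ s + 1 := Nat.lt_succ_iff.mp (i (Fin.last j)).isLt
  have h3 : (i (Fin.last j) : ℕ) ≠ s + 1 := by
    intro h; exact hne (Fin.ext (by simp [h]))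
  omega

private lemma partB (s j : ℕ) :
    ∑ i ∈ Finset.univ.filter
      (fun i : Fin (j+1) → Fin (s + 1 + 1) =>
        (StrictMono i ∧ ∀ m : Fin (j+1), 2 * ((m : ℕ) + 1) ≤ (i m : ℕ))
        ∧ ¬ i (Fin.last j) = Fin.last (s+1)),
      ∏ m : Fin (j+1), ((i m : ℚ) - (2 * (m : ℕ) + 1)) = S s (j+1) := by
  rw [S]
  refine Finset.sum_bij'
    (fun i hi => fun m => Fin.castPred (i m)
      (ne_last_aux ((Finset.mem_filter.mp hi).2.1.1) ((Finset.mem_filter.mp hi).2.2) m))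
    (fun g _ => fun m => Fin.castSucc (g m)) ?_ ?_ ?_ ?_ ?_
  · intro a ha
    simp only [mem_filter, mem_univ, true_and] at ha ⊢
    constructor
    · intro x y hxy
      have := ha.1.1 hxy
      rw [Fin.lt_def] at this ⊢
      simpa using this
    · intro m
      simpa using ha.1.2 m
  · intro a ha
    simp only [mem_filter, mem_univ, true_and] at ha ⊢
    refine ⟨⟨?_, ?_⟩, ?_⟩
    · intro x y hxy
      have := ha.1 hxy
      rw [Fin.lt_def] at this ⊢
      simpa using this
    · intro m
      simpa using ha.2 m
    · intro h
      have := congrArg Fin.val h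
      simp at this
      omega
  · intro a ha; funext m; exact Fin.ext (by simp)
  · intro a ha; funext m; exact Fin.ext (by simp)
  · intro a ha
    apply Finset.prod_congr rfl
    intro m _
    simp

private lemma lt_last_aux {s j : ℕ} {i : Fin (j+1) → Fin (s+1+1)}
    (hmono : StrictMono i) (hlast : i (Fin.last j) = Fin.last (s+1)) (m : Fin j) :
    i m.castSucc ≠ Fin.last (s+1) := by
  intro hEq
  have hm := hmono (Fin.castSucc_lt_last m)
  rw [hEq, hlast] at hm
  exact lt_irrefl _ hm

private lemma partA (s j : ℕ) (hs : 2 * j + 1 ≤ s) :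
    ∑ i ∈ Finset.univ.filter
      (fun i : Fin (j+1) → Fin (s + 1 + 1) =>
        (StrictMono i ∧ ∀ m : Fin (j+1), 2 * ((m : ℕ) + 1) ≤ (i m : ℕ))
        ∧ i (Fin.last j) = Fin.last (s+1)),
      ∏ m : Fin (j+1), ((i m : ℚ) - (2 * (m : ℕ) + 1))
    = ((s : ℚ) - 2*j) * S s j := by
  rw [S, Finset.mul_sum]
  refine Finset.sum_bij'
    (fun i hi => fun m => Fin.castPred (i m.castSucc)
      (lt_last_aux ((Finset.mem_filter.mp hi).2.1.1) ((Finset.mem_filter.mp hi).2.2) m))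
    (fun g _ => Fin.snoc (fun m => Fin.castSucc (g m)) (Fin.last (s+1))) ?_ ?_ ?_ ?_ ?_
  · intro a ha
    simp only [mem_filter, mem_univ, true_and] at ha ⊢
    constructor
    · intro x y hxy
      have := ha.1.1 (Fin.castSucc_lt_castSucc_iff.mpr hxy)
      rw [Fin.lt_def] at this ⊢
      simpa using this
    · intro m
      simpa using ha.1.2 m.castSucc
  · intro a ha
    simp only [mem_filter, mem_univ, true_and] at ha ⊢
    refine ⟨⟨?_, ?_⟩, ?_⟩
    · intro x y hxy
      rcases Fin.eq_castSucc_or_eq_last y with ⟨y', rfl⟩ | rfl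
      · rcases Fin.eq_castSucc_or_eq_last x with ⟨x', rfl⟩ | rfl
        · simp only [Fin.snoc_castSucc]
          exact Fin.castSucc_lt_castSucc_iff.mpr (ha.1 (Fin.castSucc_lt_castSucc_iff.mp hxy))
        · exact absurd hxy (by simp [Fin.lt_def])
      · rcases Fin.eq_castSucc_or_eq_last x with ⟨x', rfl⟩ | rfl
        · simp only [Fin.snoc_castSucc, Fin.snoc_last]
          exact Fin.castSucc_lt_last _
        · exact absurd hxy (lt_irrefl _)
    · intro m
      rcases Fin.eq_castSucc_or_eq_last m with ⟨m', rfl⟩ | rfl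
      · simpa using ha.2 m'
      · simp [Fin.snoc_last]
        omega
    · simp
  · intro a ha
    simp only [mem_filter, mem_univ, true_and] at ha
    funext m
    rcases Fin.eq_castSucc_or_eq_last m with ⟨m', rfl⟩ | rfl
    · simp
    · simp [ha.2]
  · intro a ha
    funext m
    exact Fin.ext (by simp)
  · intro a ha
    simp only [mem_filter, mem_univ, true_and] at ha
    simp only [Fin.coe_castPred]
    rw [Fin.prod_univ_castSucc, ha.2]
    push_cast [Fin.val_last, Fin.coe_castSucc]
    ring

private lemma S_rec (s j : ℕ) : S (s+1) (j+1) = S s (j+1) + ((s:ℚ) - 2*j) * S s j := by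
  by_cases hs : 2*j+1 ≤ s
  · rw [S]
    rw [← Finset.sum_filter_add_sum_filter_not _
      (fun i : Fin (j+1) → Fin (s+1+1) => i (Fin.last j) = Fin.last (s+1))]
    simp only [Finset.filter_filter]
    rw [partA s j hs, partB s j, add_comm]
  · rw [S_zero (s+1) (j+1) (by omega), S_zero s (j+1) (by omega)]
    by_cases h2 : s = 2*j
    · subst h2; push_cast; ring
    · rw [S_zero s j (by omega)]; ring

private noncomputable def T (s j : ℕ) : ℚ :=
  if 2*j ≤ s then (s ! : ℚ) / (2^j * ((s - 2*j)! : ℚ) * (j ! : ℚ)) else 0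

private lemma T_rec (s j : ℕ) : T (s+1) (j+1) = T s (j+1) + ((s:ℚ) - 2*j) * T s j := by
  have f0 : ∀ n : ℕ, ((n ! : ℕ) : ℚ) ≠ 0 := fun n => Nat.cast_ne_zero.mpr (Nat.factorial_ne_zero n)
  have p0 : ((2:ℚ))^j ≠ 0 := by positivity
  unfold T
  rcases lt_trichotomy s (2*j+1) with h | h | h
  · rw [if_neg (by omega), if_neg (by omega)]
    by_cases h2 : s = 2*j
    · subst h2; rw [if_pos le_rfl]; push_cast; ring
    · rw [if_neg (by omega)]; ring
  · subst h
    rw [if_pos (by omega), if_neg (by omega), if_pos (by omega)]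
    have e1 : 2*j + 1 + 1 - 2*(j+1) = 0 := by omega
    have e2 : 2*j + 1 - 2*j = 1 := by omega
    rw [e1, e2]
    have e3 : (2*j+1+1)! = (2*j+2) * (2*j+1)! := by
      rw [show 2*j+1+1 = (2*j+1)+1 by ring, Nat.factorial_succ]
    have e4 : (j+1)! = (j+1) * j ! := Nat.factorial_succ j
    rw [e3, e4]
    push_cast
    field_simp
    ring
  · obtain ⟨a, rfl⟩ : ∃ a, s = a + (2*j+2) := ⟨s - (2*j+2), by omega⟩
    rw [if_pos (by omega), if_pos (by omega), if_pos (by omega)]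
    have e1 : a + (2*j+2) + 1 - 2*(j+1) = a+1 := by omega
    have e2 : a + (2*j+2) - 2*(j+1) = a := by omega
    have e3 : a + (2*j+2) - 2*j = a+2 := by omega
    rw [e1, e2, e3]
    have e4 : (a + (2*j+2) + 1)! = (a + 2*j + 3) * (a + (2*j+2))! := by
      rw [show a + (2*j+2) + 1 = (a + (2*j+2)) + 1 by ring, Nat.factorial_succ]
      congr 1
    have e5 : (a+1)! = (a+1) * a ! := Nat.factorial_succ a
    have e6 : (a+2)! = (a+2) * ((a+1) * a !) := by
      rw [show a+2 = (a+1)+1 by ring, Nat.factorial_succ, e5]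
    have e7 : (j+1)! = (j+1) * j ! := Nat.factorial_succ j
    rw [e4, e5, e6, e7]
    have ha1 : ((a:ℚ)+1) ≠ 0 := by positivity
    have ha2 : ((a:ℚ)+2) ≠ 0 := by positivity
    have hj1 : ((j:ℚ)+1) ≠ 0 := by positivity
    push_cast
    field_simp
    ring

private lemma S_eq_T : ∀ j s, S s j = T s j := by
  intro j
  induction j with
  | zero =>
    intro s
    rw [S_base]
    unfold T
    rw [if_pos (by omega)]
    simp only [pow_zero, Nat.sub_zero, Nat.factorial_zero, Nat.cast_one, one_mul, mul_one]
    exact (div_self (Nat.cast_ne_zero.mpr (Nat.factorial_ne_zero s))).symm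
  | succ j ih =>
    intro s
    induction s with
    | zero =>
      rw [S_zero 0 (j+1) (by omega)]
      unfold T
      rw [if_neg (by omega)]
    | succ s ihs =>
      rw [S_rec, ihs, ih s, ← T_rec]

theorem stmt_0 (s j : ℕ) (hs : 2 ≤ s) (hj1 : 1 ≤ j) (hj2 : j ≤ s / 2) :
    (∑ i ∈ Finset.univ.filter
        (fun i : Fin j → Fin (s + 1) =>
          StrictMono i ∧ ∀ m : Fin j, 2 * ((m : ℕ) + 1) ≤ (i m : ℕ) ∧ 1 ≤ (i m : ℕ)),
      ∏ m : Fin j, ((i m : ℚ) - (2 * (m : ℕ) + 1))) =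
    (Nat.factorial s : ℚ) / (2 ^ j * Nat.factorial (s - 2 * j) * Nat.factorial j) := by
  have hfil : Finset.univ.filter
        (fun i : Fin j → Fin (s + 1) =>
          StrictMono i ∧ ∀ m : Fin j, 2 * ((m : ℕ) + 1) ≤ (i m : ℕ) ∧ 1 ≤ (i m : ℕ))
      = Finset.univ.filter
        (fun i : Fin j → Fin (s + 1) =>
          StrictMono i ∧ ∀ m : Fin j, 2 * ((m : ℕ) + 1) ≤ (i m : ℕ)) := by
    apply Finset.filter_congr
    intro i _
    constructor
    · rintro ⟨h1, h2⟩
      exact ⟨h1, fun m => (h2 m).1⟩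
    · rintro ⟨h1, h2⟩
      exact ⟨h1, fun m => ⟨h2 m, by have := h2 m; omega⟩⟩
  rw [hfil, ← S, S_eq_T]
  unfold T
  rw [if_pos (by omega)]
end

section
/- Let D be the differential operator 2·y_2·∂/∂y_0 − y_0·∂/∂y_1 on the polynomial ring ℂ[y_0,y_1,y_2]. Then for n ≥ 1 and 0 ≤ s ≤ 2n, D^s(y_1^n) = Σ_{j=max{0,s−n}}^{⌊s/2⌋} c_j^{(s,n)} · y_0^{s−2j} y_1^{n−s+j} y_2^{j}, where c_j^{(s,n)} = (−1)^{s−j} · s!·n! / ((s−2j)!·(n−s+j)!·j!). -/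
open MvPolynomial Nat

/-- The derivation `D = 2 y₂ ∂/∂y₀ − y₀ ∂/∂y₁` on `ℂ[y₀,y₁,y₂]`. -/
noncomputable def Dop : MvPolynomial (Fin 3) ℂ → MvPolynomial (Fin 3) ℂ :=
  fun p => 2 * X 2 * pderiv 0 p - X 0 * pderiv 1 p

noncomputable def cc (n s j : ℕ) : ℂ :=
  if s ≤ n + j ∧ 2*j ≤ s then
    (-1)^(s-j) * ((s)! * (n)! : ℂ) / ((s-2*j)! * ((n+j-s))! * (j)!) else 0

lemma cc_of_not (n s j : ℕ) (h : ¬ (s ≤ n + j ∧ 2*j ≤ s)) : cc n s j = 0 := if_neg h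

lemma cc_eq (n s j e1 e2 e3 : ℕ) (h1 : s ≤ n+j) (h2 : 2*j ≤ s)
    (he1 : s - j = e1) (he2 : s - 2*j = e2) (he3 : n + j - s = e3) :
    cc n s j = (-1)^e1 * ((s)! * (n)! : ℂ) / ((e2)! * (e3)! * (j)!) := by
  rw [cc, if_pos ⟨h1,h2⟩, he1, he2, he3]

lemma fcast (m : ℕ) : (((m+1))! : ℂ) = ((m:ℂ)+1) * ((m)! : ℂ) := by
  rw [factorial_succ]; push_cast; ring

lemma fne (m : ℕ) : ((m)! : ℂ) ≠ 0 := Nat.cast_ne_zero.mpr (factorial_ne_zero m)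

lemma cc_rec (n s j : ℕ) :
    cc n (s+1) j = (if j = 0 then 0 else 2*((s-2*(j-1) : ℕ):ℂ) * cc n s (j-1))
      - ((n+j-s : ℕ):ℂ) * cc n s j := by
  rcases Nat.eq_zero_or_pos j with rfl | hj
  · simp only [if_pos rfl, Nat.add_zero, Nat.mul_zero]
    by_cases hsn : s < n
    · obtain ⟨d, hd⟩ : ∃ d, n - s = d + 1 := ⟨n - s - 1, by omega⟩
      rw [cc_eq n (s+1) 0 (s+1) (s+1) d (by omega) (by omega) (by omega) (by omega) (by omega),
          cc_eq n s 0 s s (d+1) (by omega) (by omega) (by omega) (by omega) (by omega), hd]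
      have f1 : (((s+1))! : ℂ) = ((s:ℂ)+1) * ((s)! : ℂ) := fcast s
      have f2 : (((d+1))! : ℂ) = ((d:ℂ)+1) * ((d)! : ℂ) := fcast d
      simp only [if_true]
      rw [f1, f2]
      field_simp [fne, Nat.cast_add_one_ne_zero]
      push_cast
      ring
    · rw [cc_of_not _ _ _ (by omega), show n - s = 0 by omega]
      simp
  · obtain ⟨i, rfl⟩ : ∃ i, j = i + 1 := ⟨j - 1, by omega⟩
    rw [if_neg (by omega), Nat.add_sub_cancel]
    by_cases ha : n + (i+1) ≤ s
    · rw [cc_of_not _ _ _ (by omega), cc_of_not n s i (by omega),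
        show n + (i+1) - s = 0 by omega]
      simp
    · by_cases hb : 2*(i+1) ≤ s + 1
      · by_cases hc : 2*(i+1) ≤ s
        · -- fully live case
          obtain ⟨a, rfl⟩ : ∃ a, s = 2*i+2+a := ⟨s - (2*i+2), by omega⟩
          obtain ⟨b, rfl⟩ : ∃ b, n = i+a+b+2 := ⟨n - (i+a+2), by omega⟩
          rw [cc_eq _ _ _ (i+a+2) (a+1) b (by omega) (by omega) (by omega) (by omega) (by omega),
              cc_eq _ _ i (i+a+2) (a+2) b (by omega) (by omega) (by omega) (by omega) (by omega),
              cc_eq _ _ (i+1) (i+a+1) a (b+1) (by omega) (by omega) (by omega) (by omega) (by omega),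
              show (2*i+2+a) - 2*i = a + 2 by omega,
              show i+a+b+2 + (i+1) - (2*i+2+a) = b+1 by omega]
          have f1 : (((2*i+2+a+1))! : ℂ) = (2*(i:ℂ)+2+(a:ℂ)+1) * (((2*i+2+a))! : ℂ) := by
            rw [fcast]; push_cast; ring
          have f2 : (((a+1))! : ℂ) = ((a:ℂ)+1) * ((a)! : ℂ) := fcast a
          have f3 : (((a+2))! : ℂ) = ((a:ℂ)+2) * (((a+1))! : ℂ) := by
            rw [show a+2 = (a+1)+1 from rfl, fcast]; push_cast; ring
          have f4 : (((b+1))! : ℂ) = ((b:ℂ)+1) * ((b)! : ℂ) := fcast b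
          have f5 : (((i+1))! : ℂ) = ((i:ℂ)+1) * ((i)! : ℂ) := fcast i
          rw [f1, f3, f2, f4, f5]
          have h2 : (a:ℂ)+2 ≠ 0 := by exact_mod_cast (show a+2 ≠ 0 by omega)
          field_simp [fne, Nat.cast_add_one_ne_zero]
          push_cast
          ring
        · -- 2j = s+1 case
          have hs : s = 2*i+1 := by omega
          subst hs
          obtain ⟨b, rfl⟩ : ∃ b, n = i+1+b := ⟨n - (i+1), by omega⟩
          rw [cc_eq _ _ _ (i+1) 0 b (by omega) (by omega) (by omega) (by omega) (by omega),
              cc_eq _ _ i (i+1) 1 b (by omega) (by omega) (by omega) (by omega) (by omega),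
              cc_of_not _ _ (i+1) (by omega),
              show (2*i+1) - 2*i = 1 by omega,
              show i+1+b + (i+1) - (2*i+1) = b+1 by omega]
          have f1 : (((2*i+1+1))! : ℂ) = (2*(i:ℂ)+1+1) * (((2*i+1))! : ℂ) := by
            rw [fcast]; push_cast; ring
          have f4 : (((b+1))! : ℂ) = ((b:ℂ)+1) * ((b)! : ℂ) := fcast b
          have f5 : (((i+1))! : ℂ) = ((i:ℂ)+1) * ((i)! : ℂ) := fcast i
          rw [f1, f5]
          field_simp [fne, Nat.cast_add_one_ne_zero]
          push_cast
          ring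
      · rw [cc_of_not _ _ _ (by omega), cc_of_not n s (i+1) (by omega),
          show s - 2*i = 0 by omega]
        simp

noncomputable def tt (n s j : ℕ) : MvPolynomial (Fin 3) ℂ :=
  C (cc n s j) * X 0 ^ (s-2*j) * X 1 ^ (n+j-s) * X 2 ^ j

lemma Dop_sum {F : Finset ℕ} {f : ℕ → MvPolynomial (Fin 3) ℂ} :
    Dop (∑ j ∈ F, f j) = ∑ j ∈ F, Dop (f j) := by
  simp [Dop, Finset.mul_sum, ← Finset.sum_sub_distrib]

lemma Dop_tt (n s j : ℕ) : Dop (tt n s j) =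
    C (2*((s-2*j : ℕ):ℂ) * cc n s j) * X 0 ^ (s-2*j-1) * X 1 ^ (n+j-s) * X 2 ^ (j+1)
    - C (((n+j-s : ℕ):ℂ) * cc n s j) * X 0 ^ (s-2*j+1) * X 1 ^ (n+j-s-1) * X 2 ^ j := by
  simp only [Dop, tt, pderiv_mul, pderiv_pow, pderiv_C, pderiv_X_self,
    pderiv_X_of_ne (show (1:Fin 3) ≠ 0 by decide),
    pderiv_X_of_ne (show (2:Fin 3) ≠ 0 by decide),
    pderiv_X_of_ne (show (0:Fin 3) ≠ 1 by decide),
    pderiv_X_of_ne (show (2:Fin 3) ≠ 1 by decide)]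
  simp only [map_mul, map_natCast, map_ofNat]
  ring


lemma main (n : ℕ) : ∀ s : ℕ, Dop^[s] (X 1 ^ n) = ∑ j ∈ Finset.range (s+1), tt n s j := by
  intro s
  induction s with
  | zero =>
    simp only [Function.iterate_zero, id_eq]
    rw [Finset.sum_range_one]
    simp only [tt, cc]
    rw [if_pos ⟨by omega, by omega⟩]
    simp [div_self (fne n)]
  | succ s ih =>
    rw [Function.iterate_succ_apply', ih, Dop_sum]
    show ∑ j ∈ Finset.range (s+1), Dop (tt n s j) = ∑ j ∈ Finset.range (s+2), tt n (s+1) j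
    have step : ∀ j, Dop (tt n s j) =
        (C (2*((s-2*j : ℕ):ℂ) * cc n s j) * X 0 ^ (s-2*j-1) * X 1 ^ (n+j-s) * X 2 ^ (j+1))
        - (C (((n+j-s : ℕ):ℂ) * cc n s j) * X 0 ^ (s-2*j+1) * X 1 ^ (n+j-s-1) * X 2 ^ j) :=
      Dop_tt n s
    have e1 : ∑ j ∈ Finset.range (s+2), tt n (s+1) j
        = (∑ j ∈ Finset.range (s+2),
            C (if j = 0 then 0 else 2*((s-2*(j-1) : ℕ):ℂ) * cc n s (j-1)) *
              X 0 ^ (s+1-2*j) * X 1 ^ (n+j-(s+1)) * X 2 ^ j)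
          - (∑ j ∈ Finset.range (s+2),
            C (((n+j-s : ℕ):ℂ) * cc n s j) *
              X 0 ^ (s+1-2*j) * X 1 ^ (n+j-(s+1)) * X 2 ^ j) := by
      rw [← Finset.sum_sub_distrib]
      refine Finset.sum_congr rfl fun j _ => ?_
      simp only [tt]
      rw [cc_rec, map_sub, sub_mul, sub_mul, sub_mul]
    have e2 : (∑ j ∈ Finset.range (s+2),
            C (if j = 0 then 0 else 2*((s-2*(j-1) : ℕ):ℂ) * cc n s (j-1)) *
              X 0 ^ (s+1-2*j) * X 1 ^ (n+j-(s+1)) * X 2 ^ j) =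
        ∑ j ∈ Finset.range (s+1),
          (C (2*((s-2*j : ℕ):ℂ) * cc n s j) * X 0 ^ (s-2*j-1) * X 1 ^ (n+j-s) * X 2 ^ (j+1)
            : MvPolynomial (Fin 3) ℂ) := by
      rw [Finset.sum_range_succ']
      simp only [reduceIte, Nat.succ_ne_zero, if_false, map_zero, zero_mul, add_zero,
        Nat.add_sub_cancel]
      refine Finset.sum_congr rfl fun j _ => ?_
      rw [show s+1-2*(j+1) = s-2*j-1 by omega, show n+(j+1)-(s+1) = n+j-s by omega]
    have e3 : (∑ j ∈ Finset.range (s+2),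
            C (((n+j-s : ℕ):ℂ) * cc n s j) *
              X 0 ^ (s+1-2*j) * X 1 ^ (n+j-(s+1)) * X 2 ^ j) =
        ∑ j ∈ Finset.range (s+1),
          (C (((n+j-s : ℕ):ℂ) * cc n s j) * X 0 ^ (s-2*j+1) * X 1 ^ (n+j-s-1) * X 2 ^ j
            : MvPolynomial (Fin 3) ℂ) := by
      rw [Finset.sum_range_succ]
      rw [cc_of_not n s (s+1) (by omega)]
      simp only [mul_zero, map_zero, zero_mul, add_zero]
      refine Finset.sum_congr rfl fun j hj => ?_
      rw [show n+j-(s+1) = n+j-s-1 by omega]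
      by_cases h2 : 2*j ≤ s
      · rw [show s+1-2*j = s-2*j+1 by omega]
      · rw [cc_of_not n s j (by omega)]
        simp
    have d1 : ∑ j ∈ Finset.range (s+1), Dop (tt n s j)
        = (∑ j ∈ Finset.range (s+1),
            (C (2*((s-2*j : ℕ):ℂ) * cc n s j) * X 0 ^ (s-2*j-1) * X 1 ^ (n+j-s) * X 2 ^ (j+1)
              : MvPolynomial (Fin 3) ℂ))
          - (∑ j ∈ Finset.range (s+1),
            (C (((n+j-s : ℕ):ℂ) * cc n s j) * X 0 ^ (s-2*j+1) * X 1 ^ (n+j-s-1) * X 2 ^ j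
              : MvPolynomial (Fin 3) ℂ)) := by
      rw [← Finset.sum_sub_distrib]
      exact Finset.sum_congr rfl fun j _ => step j
    exact d1.trans ((congrArg₂ (· - ·) e2.symm e3.symm).trans e1.symm)

theorem stmt_2 (n s : ℕ) (hn : 1 ≤ n) (hs : s ≤ 2 * n) :
    Dop^[s] (X 1 ^ n) =
    ∑ j ∈ Finset.Icc (s - n) (s / 2),
      C ((-1) ^ (s - j) * (Nat.factorial s * Nat.factorial n : ℂ) /
        (Nat.factorial (s - 2 * j) * Nat.factorial (n + j - s) * Nat.factorial j)) *
      X 0 ^ (s - 2 * j) * X 1 ^ (n + j - s) * X 2 ^ j := by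
  rw [main n s]
  rw [show (∑ j ∈ Finset.range (s+1), tt n s j) = ∑ j ∈ Finset.Icc (s - n) (s / 2), tt n s j from
    (Finset.sum_subset
      (fun j hj => by
        simp only [Finset.mem_Icc] at hj
        simp only [Finset.mem_range]
        omega)
      (fun j _ hj => by
        simp only [Finset.mem_Icc] at hj
        rw [tt, cc_of_not n s j (by omega)]
        simp)).symm]
  refine Finset.sum_congr rfl fun j hj => ?_
  simp only [Finset.mem_Icc] at hj
  rw [tt, cc, if_pos (by constructor <;> omega : s ≤ n + j ∧ 2*j ≤ s)]
end
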